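/- Fix integers m, n ≥ 0. A pair (γ₁, γ₂) ∈ P(m) × P(n) lies in the image of the map μ† : DP(m,n) → P(m) × P(n) if and only if (γ₁, γ₂) is a relevant pair; moreover, when (γ₁, γ₂) is relevant, the fiber (μ†)⁻¹(γ₁, γ₂) contains a relevant decorated bipartition, i.e. it meets RDP(m,n). -/

import Mathlib

/-- A decorated pair of non-negative integers: `AB j` encodes the pair `(j+1, j)`
(i.e. type `(k, k-1)` with `k = j+1`), `BA j` encodes `(j, j+1)` (type `(k-1, k)`),
`P j` encodes `(j+1, j+1)⁺` and `M j` encodes `(j+1, j+1)⁻`. -/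
inductive DPair : Type
  | AB : ℕ → DPair
  | BA : ℕ → DPair
  | P : ℕ → DPair
  | M : ℕ → DPair
deriving DecidableEq

namespace DPair

/-- The first coordinate of a decorated pair. -/
def a : DPair → ℕ
  | AB j => j + 1
  | BA j => j
  | P j => j + 1
  | M j => j + 1

/-- The second coordinate of a decorated pair. -/
def b : DPair → ℕ
  | AB j => j
  | BA j => j + 1
  | P j => j + 1
  | M j => j + 1

end DPair

/-- `γ` is a decorated bipartition of `(m, n)`: the first coordinates sum to `m`
and the second coordinates sum to `n`. -/
def IsDP (m n : ℕ) (γ : Multiset DPair) : Prop :=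
  (γ.map DPair.a).sum = m ∧ (γ.map DPair.b).sum = n

/-- `γ` is relevant: for no `k ≥ 1` do both a pair of type `(k, k-1)` and a pair of
type `(k-1, k)` occur in `γ`. -/
def IsRelevantDP (γ : Multiset DPair) : Prop :=
  ∀ j : ℕ, ¬(DPair.AB j ∈ γ ∧ DPair.BA j ∈ γ)

/-- The first component `μ₁†` of the moment map: the multiset of first coordinates,
with zero parts discarded. -/
def muA (γ : Multiset DPair) : Multiset ℕ :=
  (γ.map DPair.a).filter (0 < ·)

/-- The second component `μ₂†` of the moment map. -/
def muB (γ : Multiset DPair) : Multiset ℕ :=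
  (γ.map DPair.b).filter (0 < ·)

/-- The `i`-th entry (0-indexed) of a multiset of naturals sorted in decreasing order,
with the value `0` for indices beyond the length (i.e. zero parts appended). -/
def nthPart (s : Multiset ℕ) (i : ℕ) : ℕ :=
  ((s.sort (· ≤ ·)).reverse).getD i 0

/-- A pair of partitions (given by their multisets of parts) is relevant if, after
sorting decreasingly and appending zero parts, corresponding parts differ by at most 1. -/
def RelevantPair (p q : Multiset ℕ) : Prop :=
  ∀ i : ℕ, nthPart p i ≤ nthPart q i + 1 ∧ nthPart q i ≤ nthPart p i + 1


/-- Counting characterization at the list level. -/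
lemma getD_lt_iff_countP {l : List ℕ} (hl : l.Pairwise (fun x y => y ≤ x)) (i v : ℕ) :
    v < l.getD i 0 ↔ i < l.countP (fun x => decide (v < x)) := by
  constructor
  · intro h
    have hi : i < l.length := by
      by_contra hi
      rw [List.getD_eq_default _ _ (le_of_not_gt hi)] at h
      exact absurd h (Nat.not_lt_zero v)
    rw [List.getD_eq_getElem _ _ hi] at h
    have htake : (l.take (i + 1)).countP (fun x => decide (v < x)) = i + 1 := by
      have hlen : (l.take (i + 1)).length = i + 1 := by
        rw [List.length_take]; omega
      have hall : ∀ x ∈ l.take (i + 1), (fun x => decide (v < x)) x = true := by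
        intro x hx
        obtain ⟨j, hj, rfl⟩ := List.mem_iff_getElem.mp hx
        rw [List.getElem_take]
        simp only [decide_eq_true_eq]
        have hji : j ≤ i := by rw [hlen] at hj; omega
        rcases lt_or_eq_of_le hji with hji | rfl
        · have := (List.pairwise_iff_getElem.mp hl) j i (by omega) hi hji
          omega
        · exact h
      rw [List.countP_eq_length.mpr hall, hlen]
    calc i < i + 1 := Nat.lt_succ_self i
      _ = (l.take (i + 1)).countP (fun x => decide (v < x)) := htake.symm
      _ ≤ l.countP (fun x => decide (v < x)) := (List.take_sublist _ _).countP_le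
  · intro h
    have hi : i < l.length := lt_of_lt_of_le h List.countP_le_length
    by_contra h'
    push_neg at h'
    rw [List.getD_eq_getElem _ _ hi] at h'
    have hle : l.countP (fun x => decide (v < x)) ≤ i := by
      conv_lhs => rw [← List.take_append_drop i l]
      rw [List.countP_append]
      have h1 : (l.take i).countP (fun x => decide (v < x)) ≤ i :=
        le_trans List.countP_le_length (by rw [List.length_take]; omega)
      have h2 : (l.drop i).countP (fun x => decide (v < x)) = 0 := by
        rw [List.countP_eq_zero]
        intro x hx
        obtain ⟨j, hj, rfl⟩ := List.mem_iff_getElem.mp hx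
        rw [List.getElem_drop]
        simp only [decide_eq_true_eq, not_lt]
        rcases Nat.eq_zero_or_pos j with rfl | hj0
        · simpa using h'
        · have hij : i + j < l.length := by
            rw [List.length_drop] at hj; omega
          have := (List.pairwise_iff_getElem.mp hl) i (i + j) hi hij (by omega)
          omega
      omega
    omega

/-- Counting characterization of `nthPart`. -/
lemma nthPart_lt_iff {s : Multiset ℕ} {i v : ℕ} :
    v < nthPart s i ↔ i < s.countP (v < ·) := by
  set l := (s.sort (· ≤ ·)).reverse with hldef
  have hsort : l.Pairwise (fun x y => y ≤ x) := by
    rw [hldef, List.pairwise_reverse]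
    exact Multiset.pairwise_sort s _
  have hcoe : (↑l : Multiset ℕ) = s := by
    rw [hldef, Multiset.coe_reverse, Multiset.sort_eq]
  have hcount : s.countP (v < ·) = l.countP (fun x => decide (v < x)) := by
    rw [← hcoe, Multiset.coe_countP]
  rw [hcount]
  exact getD_lt_iff_countP hsort i v

lemma nthPart_antitone (s : Multiset ℕ) {i j : ℕ} (h : j ≤ i) :
    nthPart s i ≤ nthPart s j := by
  by_contra h'
  push_neg at h'
  have h1 : i < s.countP (nthPart s j < ·) := nthPart_lt_iff.mp h'
  have h2 : nthPart s j < nthPart s j := nthPart_lt_iff.mpr (lt_of_le_of_lt h h1)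
  omega

lemma nthPart_muA_lt_iff (γ : Multiset DPair) (i v : ℕ) :
    v < nthPart (muA γ) i ↔ i < γ.countP (fun d => v < d.a) := by
  rw [nthPart_lt_iff, muA, Multiset.countP_filter]
  have h1 : (γ.map DPair.a).countP (fun x => v < x ∧ 0 < x)
      = (γ.map DPair.a).countP (fun x => v < x) :=
    Multiset.countP_congr rfl (fun x _ => by simp; omega)
  rw [h1, Multiset.countP_map, Multiset.countP_eq_card_filter]

lemma nthPart_muB_lt_iff (γ : Multiset DPair) (i v : ℕ) :
    v < nthPart (muB γ) i ↔ i < γ.countP (fun d => v < d.b) := by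
  rw [nthPart_lt_iff, muB, Multiset.countP_filter]
  have h1 : (γ.map DPair.b).countP (fun x => v < x ∧ 0 < x)
      = (γ.map DPair.b).countP (fun x => v < x) :=
    Multiset.countP_congr rfl (fun x _ => by simp; omega)
  rw [h1, Multiset.countP_map, Multiset.countP_eq_card_filter]

lemma countP_mono_pred {α : Type*} (s : Multiset α) (p q : α → Prop)
    [DecidablePred p] [DecidablePred q] (h : ∀ x, p x → q x) :
    s.countP p ≤ s.countP q := by
  rw [Multiset.countP_eq_card_filter, Multiset.countP_eq_card_filter]
  exact Multiset.card_le_card (Multiset.monotone_filter_right s h)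

/-- Forward direction: anything in the image is a relevant pair. -/
lemma relevantPair_of_mu (γ : Multiset DPair) :
    RelevantPair (muA γ) (muB γ) := by
  intro i
  constructor
  · by_contra h
    push_neg at h
    set y := nthPart (muB γ) i with hy
    have h1 : i < γ.countP (fun d => y + 1 < d.a) :=
      (nthPart_muA_lt_iff γ i (y + 1)).mp h
    have h2 : γ.countP (fun d => y + 1 < d.a) ≤ γ.countP (fun d => y < d.b) := by
      apply countP_mono_pred
      intro d hd
      cases d <;> simp [DPair.a, DPair.b] at hd ⊢ <;> omega
    have h3 : y < nthPart (muB γ) i :=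
      (nthPart_muB_lt_iff γ i y).mpr (lt_of_lt_of_le h1 h2)
    omega
  · by_contra h
    push_neg at h
    set x := nthPart (muA γ) i with hx
    have h1 : i < γ.countP (fun d => x + 1 < d.b) :=
      (nthPart_muB_lt_iff γ i (x + 1)).mp h
    have h2 : γ.countP (fun d => x + 1 < d.b) ≤ γ.countP (fun d => x < d.a) := by
      apply countP_mono_pred
      intro d hd
      cases d <;> simp [DPair.a, DPair.b] at hd ⊢ <;> omega
    have h3 : x < nthPart (muA γ) i :=
      (nthPart_muA_lt_iff γ i x).mpr (lt_of_lt_of_le h1 h2)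
    omega

/-- Encoding of a pair of naturals differing by at most one as a decorated pair. -/
def enc (x y : ℕ) : Option DPair :=
  if x = y + 1 then some (DPair.AB y)
  else if y = x + 1 then some (DPair.BA x)
  else if x = 0 then none
  else some (DPair.P (x - 1))

lemma enc_spec {x y : ℕ} (hxy : x ≤ y + 1) (hyx : y ≤ x + 1) :
    (x = 0 ∧ y = 0 ∧ enc x y = none) ∨
      ∃ d : DPair, enc x y = some d ∧ d.a = x ∧ d.b = y := by
  unfold enc
  split_ifs with h1 h2 h3
  · exact Or.inr ⟨_, rfl, by simp [DPair.a]; omega, rfl⟩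
  · exact Or.inr ⟨_, rfl, rfl, by simp [DPair.b]; omega⟩
  · exact Or.inl ⟨h3, by omega, rfl⟩
  · refine Or.inr ⟨_, rfl, ?_, ?_⟩ <;> simp [DPair.a, DPair.b] <;> omega

lemma enc_eq_AB {x y j : ℕ} (h : enc x y = some (DPair.AB j)) : x = j + 1 ∧ y = j := by
  unfold enc at h
  split_ifs at h with h1 h2 h3 <;> simp_all

lemma enc_eq_BA {x y j : ℕ} (h : enc x y = some (DPair.BA j)) : x = j ∧ y = j + 1 := by
  unfold enc at h
  split_ifs at h with h1 h2 h3 <;> simp_all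

lemma key_list_a : ∀ L : List (ℕ × ℕ),
    (∀ xy ∈ L, xy.1 ≤ xy.2 + 1 ∧ xy.2 ≤ xy.1 + 1) →
    ((L.filterMap (fun xy => enc xy.1 xy.2)).map DPair.a).filter (fun z => 0 < z)
      = (L.map Prod.fst).filter (fun z => 0 < z) := by
  intro L
  induction L with
  | nil => intro _; rfl
  | cons xy L ih =>
    intro h
    have hxy := h xy List.mem_cons_self
    have ih' := ih (fun z hz => h z (List.mem_cons_of_mem _ hz))
    rcases enc_spec hxy.1 hxy.2 with ⟨hx0, hy0, he⟩ | ⟨d, he, ha, hb⟩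
    · simp only [List.filterMap_cons, he]
      simp [List.filter_cons, hx0, ih']
    · by_cases hpos : 0 < xy.1
      · simp [List.filterMap_cons, he, List.filter_cons, ha, hpos, ih']
      · simp [List.filterMap_cons, he, List.filter_cons, ha, hpos, ih']

lemma key_list_b : ∀ L : List (ℕ × ℕ),
    (∀ xy ∈ L, xy.1 ≤ xy.2 + 1 ∧ xy.2 ≤ xy.1 + 1) →
    ((L.filterMap (fun xy => enc xy.1 xy.2)).map DPair.b).filter (fun z => 0 < z)
      = (L.map Prod.snd).filter (fun z => 0 < z) := by
  intro L
  induction L with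
  | nil => intro _; rfl
  | cons xy L ih =>
    intro h
    have hxy := h xy List.mem_cons_self
    have ih' := ih (fun z hz => h z (List.mem_cons_of_mem _ hz))
    rcases enc_spec hxy.1 hxy.2 with ⟨hx0, hy0, he⟩ | ⟨d, he, ha, hb⟩
    · simp only [List.filterMap_cons, he]
      simp [List.filter_cons, hy0, ih']
    · by_cases hpos : 0 < xy.2
      · simp [List.filterMap_cons, he, List.filter_cons, hb, hpos, ih']
      · simp [List.filterMap_cons, he, List.filter_cons, hb, hpos, ih']

lemma range_map_getD (l : List ℕ) : ∀ (r : ℕ), l.length ≤ r →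
    (List.range r).map (fun i => l.getD i 0) = l ++ List.replicate (r - l.length) 0 := by
  induction l with
  | nil =>
    intro r _
    simp [List.eq_replicate_iff, List.mem_map]
  | cons x l ih =>
    intro r hr
    cases r with
    | zero => simp at hr
    | succ r =>
      rw [List.range_succ_eq_map, List.map_cons, List.map_map]
      have hcomp : ((fun i => (x :: l).getD i 0) ∘ Nat.succ) = fun i => l.getD i 0 := by
        funext i; simp
      rw [hcomp, ih r (by simpa using hr)]
      have : r + 1 - (x :: l).length = r - l.length := by simp
      rw [this]
      simp

/-- The sorted decreasing list of parts underlying `nthPart`, with basic facts. -/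
lemma filter_range_map_nthPart (p : Multiset ℕ) (hp : ∀ x ∈ p, 0 < x) (r : ℕ)
    (hr : Multiset.card p ≤ r) :
    (((List.range r).map (fun i => nthPart p i)).filter (fun z => 0 < z) : Multiset ℕ) = p := by
  set l := (p.sort (· ≤ ·)).reverse with hldef
  have hcoe : (↑l : Multiset ℕ) = p := by
    rw [hldef, Multiset.coe_reverse, Multiset.sort_eq]
  have hlen : l.length ≤ r := by
    rw [hldef]
    simpa [Multiset.length_sort] using hr
  have h1 : (List.range r).map (fun i => nthPart p i)
      = l ++ List.replicate (r - l.length) 0 := range_map_getD l r hlen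
  rw [h1, List.filter_append]
  have h2 : (List.replicate (r - l.length) 0).filter (fun z : ℕ => 0 < z) = [] := by
    simp
  have h3 : l.filter (fun z : ℕ => 0 < z) = l := by
    rw [List.filter_eq_self]
    intro x hx
    have : x ∈ p := by rw [← hcoe]; exact hx
    simpa using hp x this
  rw [h2, h3, List.append_nil, hcoe]

/-- Main construction: a relevant pair of positive-part multisets comes from a
relevant decorated bipartition. -/
lemma exists_relevant_dp (p q : Multiset ℕ) (hp : ∀ x ∈ p, 0 < x) (hq : ∀ x ∈ q, 0 < x)
    (h : RelevantPair p q) :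
    ∃ γ : Multiset DPair, IsRelevantDP γ ∧ muA γ = p ∧ muB γ = q := by
  set r := max (Multiset.card p) (Multiset.card q) with hrdef
  set L := (List.range r).map (fun i => (nthPart p i, nthPart q i)) with hLdef
  have hLmem : ∀ xy ∈ L, xy.1 ≤ xy.2 + 1 ∧ xy.2 ≤ xy.1 + 1 := by
    intro xy hxy
    rw [hLdef] at hxy
    obtain ⟨i, _, rfl⟩ := List.mem_map.mp hxy
    exact h i
  set G := L.filterMap (fun xy => enc xy.1 xy.2) with hGdef
  refine ⟨(G : Multiset DPair), ?_, ?_, ?_⟩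
  · intro j ⟨hAB, hBA⟩
    rw [Multiset.mem_coe, List.mem_filterMap] at hAB hBA
    obtain ⟨xy, hxyL, he⟩ := hAB
    obtain ⟨xy', hxyL', he'⟩ := hBA
    obtain ⟨i, _, rfl⟩ := List.mem_map.mp (hLdef ▸ hxyL)
    obtain ⟨i', _, rfl⟩ := List.mem_map.mp (hLdef ▸ hxyL')
    obtain ⟨hx1, hy1⟩ := enc_eq_AB he
    obtain ⟨hx2, hy2⟩ := enc_eq_BA he'
    simp only at hx1 hy1 hx2 hy2
    rcases le_total i i' with hii | hii
    · have := nthPart_antitone q hii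
      omega
    · have := nthPart_antitone p hii
      omega
  · rw [muA, Multiset.map_coe, Multiset.filter_coe]
    have := key_list_a L hLmem
    rw [← hGdef] at this
    rw [show (fun b => decide (0 < b)) = (fun z : ℕ => decide (0 < z)) from rfl]
    rw [this]
    have hmm : L.map Prod.fst = (List.range r).map (fun i => nthPart p i) := by
      rw [hLdef, List.map_map]; rfl
    rw [hmm]
    exact filter_range_map_nthPart p hp r (le_max_left _ _)
  · rw [muB, Multiset.map_coe, Multiset.filter_coe]
    have := key_list_b L hLmem
    rw [← hGdef] at this
    rw [this]
    have hmm : L.map Prod.snd = (List.range r).map (fun i => nthPart q i) := by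
      rw [hLdef, List.map_map]; rfl
    rw [hmm]
    exact filter_range_map_nthPart q hq r (le_max_right _ _)

lemma sum_filter_pos (s : Multiset ℕ) : (s.filter (0 < ·)).sum = s.sum := by
  conv_rhs => rw [← Multiset.filter_add_not (0 < ·) s]
  rw [Multiset.sum_add]
  have h0 : (s.filter (fun a => ¬0 < a)).sum = 0 :=
    Multiset.sum_eq_zero (by
      intro x hx
      have := Multiset.of_mem_filter hx
      omega)
  omega

/-- A pair `(γ₁, γ₂) ∈ P(m) × P(n)` lies in the image of `μ† : DP(m,n) → P(m) × P(n)`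
iff it is a relevant pair; moreover when it is relevant, the fiber meets `RDP(m,n)`. -/
theorem mem_image_mu_iff_relevantPair {m n : ℕ}
    (γ₁ : Nat.Partition m) (γ₂ : Nat.Partition n) :
    ((∃ γ : Multiset DPair, IsDP m n γ ∧ muA γ = γ₁.parts ∧ muB γ = γ₂.parts) ↔
      RelevantPair γ₁.parts γ₂.parts) ∧
    (RelevantPair γ₁.parts γ₂.parts →
      ∃ γ : Multiset DPair, IsDP m n γ ∧ IsRelevantDP γ ∧
        muA γ = γ₁.parts ∧ muB γ = γ₂.parts) := by
  have main : RelevantPair γ₁.parts γ₂.parts →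
      ∃ γ : Multiset DPair, IsDP m n γ ∧ IsRelevantDP γ ∧
        muA γ = γ₁.parts ∧ muB γ = γ₂.parts := by
    intro h
    obtain ⟨γ, hrel, hA, hB⟩ := exists_relevant_dp γ₁.parts γ₂.parts
      (fun x hx => γ₁.parts_pos hx) (fun x hx => γ₂.parts_pos hx) h
    refine ⟨γ, ⟨?_, ?_⟩, hrel, hA, hB⟩
    · have := sum_filter_pos (γ.map DPair.a)
      rw [show (γ.map DPair.a).filter (0 < ·) = muA γ from rfl, hA, γ₁.parts_sum] at this
      omega
    · have := sum_filter_pos (γ.map DPair.b)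
      rw [show (γ.map DPair.b).filter (0 < ·) = muB γ from rfl, hB, γ₂.parts_sum] at this
      omega
  constructor
  · constructor
    · rintro ⟨γ, _, hA, hB⟩
      rw [← hA, ← hB]
      exact relevantPair_of_mu γ
    · intro h
      obtain ⟨γ, h1, _, h3, h4⟩ := main h
      exact ⟨γ, h1, h3, h4⟩
  · intro h
    obtain ⟨γ, h1, h2, h3, h4⟩ := main h
    exact ⟨γ, h1, h2, h3, h4⟩
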